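/- arXiv:2106.03486 — 2 statements merged into one kernel-verified Lean document; each statement's English description precedes it below -/
import Mathlib

section
/- Let V ⊂ H be a continuously embedded pair of Hilbert spaces with compact embedding, and A : V × V → ℂ a continuous sesquilinear form satisfying the Gårding inequality Re A(u,u) ≥ γ‖u‖²_V - γ'‖u‖²_H with γ > 0. If the only solution u ∈ V of A(u,v) = 0 for all v ∈ V is u = 0, then for every continuous linear functional F on V there exists a unique u ∈ V with A(u,v) = F(v) for all v ∈ V. -/
open scoped InnerProductSpace ComplexConjugate

/-- Riesz representation of a bounded sesquilinear form. -/
theorem exists_repr_op {V : Type*} [NormedAddCommGroup V] [InnerProductSpace ℂ V]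
    [CompleteSpace V]
    (A : V → V → ℂ) (M : ℝ)
    (hbound : ∀ u v : V, ‖A u v‖ ≤ M * ‖u‖ * ‖v‖)
    (hadd1 : ∀ u u' v : V, A (u + u') v = A u v + A u' v)
    (hsmul1 : ∀ (c : ℂ) (u v : V), A (c • u) v = (starRingEnd ℂ) c * A u v)
    (hadd2 : ∀ u v v' : V, A u (v + v') = A u v + A u v')
    (hsmul2 : ∀ (c : ℂ) (u v : V), A u (c • v) = c * A u v) :
    ∃ T : V →L[ℂ] V, ∀ u v : V, A u v = ⟪T u, v⟫_ℂ := by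
  -- the functional `v ↦ A u v`
  set f : V → (V →L[ℂ] ℂ) := fun u => LinearMap.mkContinuous
    { toFun := A u, map_add' := hadd2 u, map_smul' := fun c v => hsmul2 c u v }
    (M * ‖u‖) (fun v => hbound u v) with hf
  have hfapp : ∀ u v, f u v = A u v := fun u v => rfl
  set T₀ : V →ₗ[ℂ] V :=
    { toFun := fun u => (InnerProductSpace.toDual ℂ V).symm (f u)
      map_add' := by
        intro u u'
        show (InnerProductSpace.toDual ℂ V).symm _ = _
        rw [← map_add]
        congr 1
        ext v
        simp [hfapp, hadd1]
      map_smul' := by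
        intro c u
        show (InnerProductSpace.toDual ℂ V).symm _ = _
        have : f (c • u) = conj c • f u := by
          ext v
          simp [hfapp, hsmul1]
        rw [this, LinearIsometryEquiv.map_smulₛₗ]
        simp }
  have hT₀ : ∀ u v, A u v = ⟪T₀ u, v⟫_ℂ := by
    intro u v
    have : ⟪(InnerProductSpace.toDual ℂ V).symm (f u), v⟫_ℂ = f u v := by
      rw [← InnerProductSpace.toDual_apply_apply]
      simp
    rw [← hfapp u v, ← this]
    rfl
  refine ⟨LinearMap.mkContinuous T₀ (max M 0) (fun u => ?_), fun u v => hT₀ u v⟩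
  have h1 : ‖T₀ u‖ = ‖f u‖ := ((InnerProductSpace.toDual ℂ V).symm.norm_map (f u))
  have h2 : ‖f u‖ ≤ max (M * ‖u‖) 0 := LinearMap.mkContinuous_norm_le' _ _
  calc ‖T₀ u‖ ≤ max (M * ‖u‖) 0 := h1 ▸ h2
    _ ≤ max M 0 * ‖u‖ := by
        rcases le_or_gt 0 M with h | h
        · rw [max_eq_left (by positivity), max_eq_left h]
        · rw [max_eq_right h.le]
          exact max_le (by nlinarith [norm_nonneg u]) (by positivity)

open scoped InnerProductSpace ComplexConjugate Topology

/-- Extraction: a compact operator applied to a bounded sequence has a convergent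
subsequence. -/
theorem compact_extract {V : Type*} [NormedAddCommGroup V] [InnerProductSpace ℂ V]
    (C : V →L[ℂ] V) (hC : IsCompactOperator ⇑C) (x : ℕ → V) (R : ℝ)
    (hx : ∀ n, ‖x n‖ ≤ R) :
    ∃ w : V, ∃ φ : ℕ → ℕ, StrictMono φ ∧
      Filter.Tendsto (fun n => C (x (φ n))) Filter.atTop (𝓝 w) := by
  have hC' : IsCompactOperator ⇑(C : V →ₗ[ℂ] V) := hC
  have hK : IsCompact (closure (⇑C '' Metric.closedBall 0 R)) :=
    hC'.isCompact_closure_image_closedBall R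
  have hmem : ∀ n, C (x n) ∈ closure (⇑C '' Metric.closedBall 0 R) := fun n =>
    subset_closure ⟨x n, by simpa [Metric.mem_closedBall, dist_eq_norm] using hx n, rfl⟩
  obtain ⟨w, -, φ, hφ, hw⟩ := hK.tendsto_subseq hmem
  exact ⟨w, φ, hφ, hw⟩

/-- Lower bound for an injective `1 - C` with `C` compact. -/
theorem fred_lower_bound {V : Type*} [NormedAddCommGroup V] [InnerProductSpace ℂ V]
    (C : V →L[ℂ] V) (hC : IsCompactOperator ⇑C)
    (hinj : ∀ u : V, u - C u = 0 → u = 0) :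
    ∃ c : ℝ, 0 < c ∧ ∀ u : V, c * ‖u‖ ≤ ‖u - C u‖ := by
  by_contra hcon
  push_neg at hcon
  have key : ∀ n : ℕ, ∃ x : V, ‖x‖ = 1 ∧ ‖x - C x‖ < 1 / (n + 1) := by
    intro n
    obtain ⟨u, hu⟩ := hcon (1 / (n + 1)) (by positivity)
    have hu0 : u ≠ 0 := by
      rintro rfl
      simp at hu
    refine ⟨‖u‖⁻¹ • u, ?_, ?_⟩
    · rw [norm_smul, norm_inv, norm_norm, inv_mul_cancel₀ (norm_ne_zero_iff.mpr hu0)]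
    · have : (‖u‖⁻¹ • u : V) - C (‖u‖⁻¹ • u) = ‖u‖⁻¹ • (u - C u) := by
        rw [ContinuousLinearMap.map_smul_of_tower, smul_sub]
      rw [this, norm_smul, norm_inv, norm_norm]
      rw [inv_mul_lt_iff₀ (norm_pos_iff.mpr hu0), mul_comm]
      exact hu
  choose x hx1 hx2 using key
  obtain ⟨w, φ, hφ, hw⟩ := compact_extract C hC x 1 (fun n => (hx1 n).le)
  have hDx : Filter.Tendsto (fun n => x (φ n) - C (x (φ n))) Filter.atTop (𝓝 0) := by
    rw [tendsto_zero_iff_norm_tendsto_zero]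
    apply squeeze_zero (fun n => by positivity) (fun n => ?_)
      (tendsto_one_div_add_atTop_nhds_zero_nat.comp (hφ.tendsto_atTop))
    simpa using (hx2 (φ n)).le
  have hxw : Filter.Tendsto (fun n => x (φ n)) Filter.atTop (𝓝 w) := by
    have := hDx.add hw
    simpa using this
  have hw1 : ‖w‖ = 1 := by
    have := (continuous_norm.tendsto w).comp hxw
    have h2 : Filter.Tendsto (fun n => ‖x (φ n)‖) Filter.atTop (𝓝 1) := by
      simpa [hx1] using Filter.tendsto_const_nhds (x := (1:ℝ)) (f := Filter.atTop (α := ℕ))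
    exact tendsto_nhds_unique this h2
  have hwD : w - C w = 0 := by
    have h1 : Filter.Tendsto (fun n => x (φ n) - C (x (φ n))) Filter.atTop (𝓝 (w - C w)) :=
      hxw.sub ((C.continuous.tendsto w).comp hxw)
    exact tendsto_nhds_unique h1 hDx
  have := hinj w hwD
  rw [this, norm_zero] at hw1
  norm_num at hw1

/-- Fredholm alternative: if `C` is compact and `1 - C` injective then surjective. -/
theorem fredholm_surj {V : Type*} [NormedAddCommGroup V] [InnerProductSpace ℂ V]
    [CompleteSpace V]
    (C : V →L[ℂ] V) (hC : IsCompactOperator ⇑C)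
    (hinj : ∀ u : V, u - C u = 0 → u = 0) :
    ∀ y : V, ∃ u : V, u - C u = y := by
  set D : V →L[ℂ] V := ContinuousLinearMap.id ℂ V - C with hD
  have hDapp : ∀ u, D u = u - C u := fun u => rfl
  obtain ⟨c, hc, hlow⟩ := fred_lower_bound C hC hinj
  have hDinj : Function.Injective ⇑D := by
    intro a b hab
    have : D (a - b) = 0 := by rw [map_sub, hab, sub_self]
    have := hinj (a - b) (by rw [← hDapp]; exact this)
    exact sub_eq_zero.mp this
  -- lower bound for powers
  have hlowpow : ∀ n : ℕ, ∀ u : V, c ^ n * ‖u‖ ≤ ‖(D ^ n) u‖ := by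
    intro n
    induction n with
    | zero => intro u; simp
    | succ n ih =>
      intro u
      have h1 : (D ^ (n + 1)) u = (D ^ n) (D u) := by
        rw [pow_succ]; rfl
      rw [h1]
      calc c ^ (n + 1) * ‖u‖ = c ^ n * (c * ‖u‖) := by ring
        _ ≤ c ^ n * ‖D u‖ := by
            have := hlow u
            rw [hDapp]
            nlinarith [pow_pos hc n]
        _ ≤ ‖(D ^ n) (D u)‖ := ih (D u)
  have hpowinj : ∀ n : ℕ, Function.Injective ⇑(D ^ n) := by
    intro n a b hab
    have h := hlowpow n (a - b)
    rw [map_sub, hab, sub_self, norm_zero] at h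
    have : ‖a - b‖ ≤ 0 := by nlinarith [pow_pos hc n, norm_nonneg (a - b)]
    rw [← sub_eq_zero]
    exact norm_le_zero_iff.mp this
  set Vn : ℕ → Submodule ℂ V := fun n => LinearMap.range ((D ^ n : V →L[ℂ] V) : V →ₗ[ℂ] V) with hVn
  have hclosed : ∀ n, IsClosed (Vn n : Set V) := by
    intro n
    have hanti : AntilipschitzWith ⟨(c ^ n)⁻¹, by positivity⟩ ⇑(D ^ n) :=
      AddMonoidHomClass.antilipschitz_of_bound (D ^ n) (fun x => by
        change ‖x‖ ≤ (c ^ n)⁻¹ * ‖(D ^ n) x‖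
        rw [le_inv_mul_iff₀ (by positivity : (0:ℝ) < c ^ n)]
        exact hlowpow n x)
    have heq : (Vn n : Set V) = Set.range ⇑(D ^ n) := by
      ext z; simp only [hVn, SetLike.mem_coe, LinearMap.mem_range, Set.mem_range]; exact Iff.rfl
    rw [heq]
    exact hanti.isClosed_range (D ^ n).uniformContinuous
  have hmono : ∀ n, Vn (n + 1) ≤ Vn n := by
    rintro n _ ⟨z, rfl⟩
    exact ⟨D z, by rw [pow_succ]; rfl⟩
  have hmono' : Antitone Vn := antitone_nat_of_succ_le hmono
  have hDinto : ∀ n, ∀ x ∈ Vn n, D x ∈ Vn (n + 1) := by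
    rintro n _ ⟨z, rfl⟩
    exact ⟨z, by rw [pow_succ']; rfl⟩
  -- suppose not surjective
  intro y
  by_contra hsur
  push_neg at hsur
  have hynot : ∀ n : ℕ, (D ^ n) y ∉ Vn (n + 1) := by
    rintro n ⟨z, hz⟩
    have : (D ^ n) (D z) = (D ^ n) y := by rw [← hz, pow_succ]; rfl
    exact hsur z (hpowinj n this)
  have hymem : ∀ n : ℕ, (D ^ n) y ∈ Vn n := fun n => ⟨y, rfl⟩
  -- orthonormal-ish sequence
  have hx : ∀ n : ℕ, ∃ x : V, x ∈ Vn n ∧ ‖x‖ = 1 ∧ x ∈ (Vn (n + 1))ᗮ := by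
    intro n
    haveI : CompleteSpace (Vn (n + 1)) := (hclosed (n + 1)).completeSpace_coe
    set u : V := (D ^ n) y with hu
    set p : V := ((Vn (n + 1)).orthogonalProjectionOnto u : V) with hp
    have hdne : u - p ≠ 0 := by
      intro h
      have heq : u = p := by rwa [sub_eq_zero] at h
      have hmemp : p ∈ Vn (n + 1) := ((Vn (n + 1)).orthogonalProjectionOnto u).2
      have : u ∈ Vn (n + 1) := by rw [heq]; exact hmemp
      exact hynot n this
    refine ⟨‖u - p‖⁻¹ • (u - p), ?_, ?_, ?_⟩
    · exact (Vn n).smul_mem _ ((Vn n).sub_mem (hymem n)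
        (hmono n ((Vn (n + 1)).orthogonalProjectionOnto u).2))
    · rw [norm_smul, norm_inv, norm_norm, inv_mul_cancel₀ (norm_ne_zero_iff.mpr hdne)]
    · exact Submodule.smul_mem _ _ (Submodule.sub_starProjection_mem_orthogonal (K := Vn (n + 1)) u)
  choose x hxmem hxnorm hxorth using hx
  -- separation of the images
  have hsep : ∀ n m : ℕ, n < m → 1 ≤ ‖C (x n) - C (x m)‖ := by
    intro n m hnm
    have hCx : ∀ k, C (x k) = x k - D (x k) := by
      intro k; rw [hDapp]; abel
    set w : V := D (x n) + x m - D (x m) with hw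
    have hwmem : w ∈ Vn (n + 1) := by
      refine Submodule.sub_mem _ (Submodule.add_mem _ ?_ ?_) ?_
      · exact hDinto n _ (hxmem n)
      · exact hmono' hnm (hxmem m)
      · exact hmono' (by omega : n + 1 ≤ m + 1) (hDinto m _ (hxmem m))
    have hdiff : C (x n) - C (x m) = x n - w := by
      rw [hCx, hCx, hw]; abel
    have horth : ⟪x n, w⟫_ℂ = 0 := by
      have := (Submodule.mem_orthogonal (Vn (n + 1)) (x n)).mp (hxorth n) w hwmem
      rw [← inner_conj_symm, this, map_zero]
    have hnormsq : ‖x n - w‖ * ‖x n - w‖ = ‖x n‖ * ‖x n‖ + ‖w‖ * ‖w‖ := by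
      have : ⟪x n, -w⟫_ℂ = 0 := by rw [inner_neg_right, horth, neg_zero]
      have h2 := norm_add_sq_eq_norm_sq_add_norm_sq_of_inner_eq_zero (x n) (-w) this
      simpa [sub_eq_add_neg] using h2
    rw [hdiff]
    nlinarith [norm_nonneg (x n - w), norm_nonneg w, hxnorm n, hnormsq]
  -- contradiction with compactness
  obtain ⟨w0, φ, hφ, hw0⟩ := compact_extract C hC x 1 (fun n => (hxnorm n).le)
  have hcauchy : CauchySeq (fun n => C (x (φ n))) := hw0.cauchySeq
  obtain ⟨N, hN⟩ := Metric.cauchySeq_iff'.mp hcauchy 1 one_pos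
  have h1 := hN (N + 1) (by omega)
  rw [dist_eq_norm] at h1
  have h2 := hsep (φ N) (φ (N + 1)) (hφ (by omega))
  rw [norm_sub_rev] at h2
  linarith

/-- Fredholm-alternative existence theorem: if `V` is compactly embedded in
`H`, `A` is a bounded sesquilinear form on `V` satisfying a Gårding
inequality, and the homogeneous problem has only the trivial solution, then
for every continuous linear functional `F` the variational problem
`A(u,v) = F(v)` for all `v` has a unique solution. -/
theorem stmt_7 {V H : Type*}
    [NormedAddCommGroup V] [InnerProductSpace ℂ V] [CompleteSpace V]
    [NormedAddCommGroup H] [InnerProductSpace ℂ H] [CompleteSpace H]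
    (emb : V →L[ℂ] H) (hinj : Function.Injective emb)
    (hcomp : IsCompactOperator (⇑emb))
    (A : V → V → ℂ) (M : ℝ)
    (hbound : ∀ u v : V, ‖A u v‖ ≤ M * ‖u‖ * ‖v‖)
    (hadd1 : ∀ u u' v : V, A (u + u') v = A u v + A u' v)
    (hsmul1 : ∀ (c : ℂ) (u v : V), A (c • u) v = (starRingEnd ℂ) c * A u v)
    (hadd2 : ∀ u v v' : V, A u (v + v') = A u v + A u v')
    (hsmul2 : ∀ (c : ℂ) (u v : V), A u (c • v) = c * A u v)
    (γ γ' : ℝ) (hγ : 0 < γ)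
    (hgarding : ∀ u : V, (A u u).re ≥ γ * ‖u‖ ^ 2 - γ' * ‖emb u‖ ^ 2)
    (huniq : ∀ u : V, (∀ v : V, A u v = 0) → u = 0) :
    ∀ F : V →L[ℂ] ℂ, ∃! u : V, ∀ v : V, A u v = F v := by
  -- Riesz representation of `A`
  obtain ⟨T, hT⟩ := exists_repr_op A M (fun u v => by
      simpa using hbound u v) hadd1 hsmul1 hadd2 hsmul2
  -- the compact correction operator
  set K : V →L[ℂ] V := (γ' : ℂ) • (ContinuousLinearMap.adjoint emb ∘L emb) with hKdef
  have hKapp : ∀ u v : V, ⟪K u, v⟫_ℂ = (γ' : ℂ) * ⟪emb u, emb v⟫_ℂ := by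
    intro u v
    have : K u = (γ' : ℂ) • (ContinuousLinearMap.adjoint emb (emb u)) := rfl
    rw [this, inner_smul_left, ContinuousLinearMap.adjoint_inner_left]
    simp
  have hKcomp : IsCompactOperator ⇑K := by
    have h1 : IsCompactOperator (⇑(ContinuousLinearMap.adjoint emb) ∘ ⇑emb) :=
      hcomp.clm_comp (ContinuousLinearMap.adjoint emb)
    have h2 : ⇑K = (γ' : ℂ) • (⇑(ContinuousLinearMap.adjoint emb) ∘ ⇑emb) := by
      ext u; rfl
    rw [h2]
    exact h1.smul _
  -- the coercive operator T + K
  set TB : V →L[ℂ] V := T + K with hTBdef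
  have hTBapp : ∀ u v : V, ⟪TB u, v⟫_ℂ = A u v + (γ' : ℂ) * ⟪emb u, emb v⟫_ℂ := by
    intro u v
    rw [hTBdef]
    simp only [ContinuousLinearMap.add_apply, inner_add_left, hKapp, ← hT]
  have hcoer : ∀ u : V, γ * ‖u‖ ^ 2 ≤ (⟪TB u, u⟫_ℂ).re := by
    intro u
    rw [hTBapp]
    have h1 : ((γ' : ℂ) * ⟪emb u, emb u⟫_ℂ).re = γ' * ‖emb u‖ ^ 2 := by
      rw [inner_self_eq_norm_sq_to_K]
      norm_cast
      show ((Complex.ofReal γ') * (Complex.ofReal (‖emb u‖ ^ 2))).re = _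
      rw [← Complex.ofReal_mul, Complex.ofReal_re]
    rw [Complex.add_re, h1]
    have := hgarding u
    linarith
  have hTBlow : ∀ u : V, γ * ‖u‖ ≤ ‖TB u‖ := by
    intro u
    rcases eq_or_ne u 0 with rfl | hu
    · simp
    · have h1 := hcoer u
      have h2 : (⟪TB u, u⟫_ℂ).re ≤ ‖TB u‖ * ‖u‖ := by
        calc (⟪TB u, u⟫_ℂ).re ≤ ‖⟪TB u, u⟫_ℂ‖ := Complex.re_le_norm _
          _ ≤ ‖TB u‖ * ‖u‖ := norm_inner_le_norm _ _
      have hun : 0 < ‖u‖ := norm_pos_iff.mpr hu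
      nlinarith
  -- TB is bijective
  have hTBinj : LinearMap.ker (TB : V →ₗ[ℂ] V) = ⊥ := by
    rw [LinearMap.ker_eq_bot']
    intro u hu
    have := hTBlow u
    rw [show TB u = 0 from hu, norm_zero] at this
    have : ‖u‖ ≤ 0 := by nlinarith
    exact norm_le_zero_iff.mp this
  have hTBclosed : IsClosed ((LinearMap.range (TB : V →ₗ[ℂ] V) : Submodule ℂ V) : Set V) := by
    have hanti : AntilipschitzWith ⟨γ⁻¹, by positivity⟩ ⇑TB :=
      AddMonoidHomClass.antilipschitz_of_bound TB (fun x => by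
        change ‖x‖ ≤ γ⁻¹ * ‖TB x‖
        rw [le_inv_mul_iff₀ hγ]
        exact hTBlow x)
    have heq : ((LinearMap.range (TB : V →ₗ[ℂ] V) : Submodule ℂ V) : Set V) = Set.range ⇑TB := by
      ext z; simp
    rw [heq]
    exact hanti.isClosed_range TB.uniformContinuous
  have hTBsurj : LinearMap.range (TB : V →ₗ[ℂ] V) = ⊤ := by
    haveI : CompleteSpace (LinearMap.range (TB : V →ₗ[ℂ] V) : Submodule ℂ V) :=
      hTBclosed.completeSpace_coe
    rw [← Submodule.orthogonal_eq_bot_iff]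
    rw [Submodule.eq_bot_iff]
    intro w hw
    have h0 : ⟪TB w, w⟫_ℂ = 0 :=
      (Submodule.mem_orthogonal _ w).mp hw (TB w) (LinearMap.mem_range_self _ w)
    have hle := hcoer w
    rw [h0] at hle
    simp only [Complex.zero_re] at hle
    by_contra hne
    have hpos : 0 < ‖w‖ := norm_pos_iff.mpr hne
    nlinarith [mul_pos hγ (mul_pos hpos hpos)]
  set E := ContinuousLinearEquiv.ofBijective TB hTBinj hTBsurj with hE
  have hEapp : ∀ u : V, E u = TB u := fun u => rfl
  -- the compact operator C' and D' = 1 - C'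
  set C' : V →L[ℂ] V := (E.symm : V →L[ℂ] V) ∘L K with hC'def
  have hC'comp : IsCompactOperator ⇑C' := by
    have : ⇑C' = ⇑(E.symm : V →L[ℂ] V) ∘ ⇑K := by ext u; rfl
    rw [this]
    exact hKcomp.clm_comp _
  -- key identity : TB (u - C' u) = T u
  have hkey : ∀ u : V, TB (u - C' u) = T u := by
    intro u
    have h1 : TB (C' u) = K u := by
      have : C' u = E.symm (K u) := rfl
      rw [this, ← hEapp, E.apply_symm_apply]
    rw [map_sub, h1, hTBdef]
    simp
  have hD'inj : ∀ u : V, u - C' u = 0 → u = 0 := by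
    intro u hu
    apply huniq
    intro v
    have h1 : T u = 0 := by rw [← hkey, hu, map_zero]
    rw [hT, h1, inner_zero_left]
  -- final assembly
  intro F
  set y : V := (InnerProductSpace.toDual ℂ V).symm F with hy
  have hyF : ∀ v : V, F v = ⟪y, v⟫_ℂ := by
    intro v
    rw [hy, ← InnerProductSpace.toDual_apply_apply]
    simp
  obtain ⟨u, hu⟩ := fredholm_surj C' hC'comp hD'inj (E.symm y)
  have hTu : T u = y := by
    have : TB (u - C' u) = TB (E.symm y) := by rw [hu]
    rw [hkey] at this
    rw [this, ← hEapp, E.apply_symm_apply]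
  refine ⟨u, fun v => by rw [hT, hTu, hyF], ?_⟩
  intro u' hu'
  have hdiff : ∀ v : V, A (u' - u) v = 0 := by
    intro v
    have hneg : A (-u) v = -A u v := by
      have := hsmul1 (-1) u v
      simpa using this
    have : A (u' - u) v = A u' v - A u v := by
      rw [sub_eq_add_neg, hadd1, hneg, sub_eq_add_neg]
    rw [this, hu' v, hT, hTu, ← hyF]
    ring
  have := huniq (u' - u) hdiff
  rwa [sub_eq_zero] at this
end

section
/- Let V and W be Hilbert spaces, A : V × V → ℂ a bounded coercive sesquilinear form (Re A(u,u) ≥ α‖u‖²_V with α > 0) and B : V × W → ℂ a bounded bilinear form satisfying the inf-sup condition sup_{‖u‖_V=1}|B(u,λ)| ≥ β‖λ‖_W for all λ ∈ W with β > 0. Then for every F ∈ V' the saddle-point problem A(u,v) + B(v,λ) = F(v) for all v ∈ V, B(u,μ) = 0 for all μ ∈ W, has a unique solution (u,λ) ∈ V × W. -/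
open scoped ComplexConjugate

/-- Complex Lax–Milgram surjectivity: a bounded coercive operator on a complex
Hilbert space is surjective. -/
lemma bb_surj_of_coercive {H : Type*} [NormedAddCommGroup H] [InnerProductSpace ℂ H]
    [CompleteSpace H] (S : H →L[ℂ] H) (α : ℝ) (hα : 0 < α)
    (hc : ∀ u : H, α * ‖u‖ ^ 2 ≤ (inner ℂ (S u) u : ℂ).re) :
    Function.Surjective S := by
  have hbound : ∀ u : H, ‖u‖ ≤ α⁻¹ * ‖S u‖ := by
    intro u
    rcases eq_or_ne u 0 with rfl | hu
    · simp
    · have hu' : 0 < ‖u‖ := norm_pos_iff.2 hu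
      have h1 : α * ‖u‖ ^ 2 ≤ ‖S u‖ * ‖u‖ := by
        calc α * ‖u‖ ^ 2 ≤ (inner ℂ (S u) u : ℂ).re := hc u
          _ ≤ ‖(inner ℂ (S u) u : ℂ)‖ := by
              exact Complex.re_le_norm _
          _ ≤ ‖S u‖ * ‖u‖ := norm_inner_le_norm _ _
      rw [le_inv_mul_iff₀ hα]
      nlinarith
  have hanti : AntilipschitzWith ⟨α⁻¹, by positivity⟩ S :=
    S.antilipschitz_of_bound hbound
  have hclosed : IsClosed (Set.range S) := hanti.isClosed_range S.uniformContinuous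
  set K : Submodule ℂ H := LinearMap.range (S : H →ₗ[ℂ] H) with hK
  have hKc : IsClosed (K : Set H) := by
    simpa [hK, LinearMap.coe_range] using hclosed
  haveI : CompleteSpace K := hKc.completeSpace_coe
  have hbot : Kᗮ = ⊥ := by
    rw [Submodule.eq_bot_iff]
    intro w hw
    have h0 : (inner ℂ (S w) w : ℂ) = 0 :=
      (Submodule.mem_orthogonal K w).1 hw (S w) (LinearMap.mem_range_self _ w)
    have h1 := hc w
    rw [h0] at h1
    simp only [Complex.zero_re] at h1
    have h2 : ‖w‖ ^ 2 ≤ 0 := by by_contra h; push_neg at h; nlinarith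
    have h3 : ‖w‖ ^ 2 = 0 := le_antisymm h2 (sq_nonneg _)
    have : ‖w‖ = 0 := by nlinarith [norm_nonneg w]
    exact norm_eq_zero.1 this
  have htop : K = ⊤ := Submodule.orthogonal_eq_bot_iff.1 hbot
  intro y
  have : y ∈ K := htop ▸ Submodule.mem_top
  exact this

/-- Babuška–Brezzi theorem: if `A` is a bounded coercive sesquilinear form on
`V` and `B` is a bounded bilinear form on `V × W` satisfying the inf-sup
condition, then for every continuous linear functional `F` on `V` the
saddle-point problem has a unique solution `(u, λ)`. -/
theorem stmt_11 {V W : Type*}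
    [NormedAddCommGroup V] [InnerProductSpace ℂ V] [CompleteSpace V]
    [NormedAddCommGroup W] [InnerProductSpace ℂ W] [CompleteSpace W]
    (A : V → V → ℂ) (B : V → W → ℂ) (MA MB α β : ℝ) (hα : 0 < α) (hβ : 0 < β)
    (hAbound : ∀ u v : V, ‖A u v‖ ≤ MA * ‖u‖ * ‖v‖)
    (hAadd1 : ∀ u u' v : V, A (u + u') v = A u v + A u' v)
    (hAsmul1 : ∀ (c : ℂ) (u v : V), A (c • u) v = (starRingEnd ℂ) c * A u v)
    (hAadd2 : ∀ u v v' : V, A u (v + v') = A u v + A u v')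
    (hAsmul2 : ∀ (c : ℂ) (u v : V), A u (c • v) = c * A u v)
    (hAcoer : ∀ u : V, (A u u).re ≥ α * ‖u‖ ^ 2)
    (hBbound : ∀ (u : V) (l : W), ‖B u l‖ ≤ MB * ‖u‖ * ‖l‖)
    (hBadd1 : ∀ (u u' : V) (l : W), B (u + u') l = B u l + B u' l)
    (hBsmul1 : ∀ (c : ℂ) (u : V) (l : W), B (c • u) l = c * B u l)
    (hBadd2 : ∀ (u : V) (l l' : W), B u (l + l') = B u l + B u l')
    (hBsmul2 : ∀ (c : ℂ) (u : V) (l : W), B u (c • l) = c * B u l)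
    (hinfsup : ∀ l : W, β * ‖l‖ ≤ ⨆ u : {u : V // ‖u‖ = 1}, ‖B u.1 l‖) :
    ∀ F : V →L[ℂ] ℂ, ∃! p : V × W,
      (∀ v : V, A p.1 v + B v p.2 = F v) ∧ (∀ μ : W, B p.1 μ = 0) := by
  intro F
  have hMA0 : (0:ℝ) ≤ max MA 0 := le_max_right _ _
  have hMB0 : (0:ℝ) ≤ max MB 0 := le_max_right _ _
  -- the functional `v ↦ A u v` as a continuous linear map
  let fA : V → (V →L[ℂ] ℂ) := fun u => LinearMap.mkContinuous
    { toFun := fun v => A u v, map_add' := hAadd2 u, map_smul' := fun c v => hAsmul2 c u v }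
    (max MA 0 * ‖u‖) (fun v => by
      simp only [LinearMap.coe_mk, AddHom.coe_mk]
      calc ‖A u v‖ ≤ MA * ‖u‖ * ‖v‖ := hAbound u v
        _ ≤ max MA 0 * ‖u‖ * ‖v‖ :=
            mul_le_mul_of_nonneg_right
              (mul_le_mul_of_nonneg_right (le_max_left MA 0) (norm_nonneg u)) (norm_nonneg v))
  -- the functional `v ↦ B v l` as a continuous linear map
  let fB : W → (V →L[ℂ] ℂ) := fun l => LinearMap.mkContinuous
    { toFun := fun v => B v l, map_add' := fun v v' => hBadd1 v v' l,
      map_smul' := fun c v => hBsmul1 c v l }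
    (max MB 0 * ‖l‖) (fun v => by
      simp only [LinearMap.coe_mk, AddHom.coe_mk]
      calc ‖B v l‖ ≤ MB * ‖v‖ * ‖l‖ := hBbound v l
        _ ≤ max MB 0 * ‖v‖ * ‖l‖ :=
            mul_le_mul_of_nonneg_right
              (mul_le_mul_of_nonneg_right (le_max_left MB 0) (norm_nonneg v)) (norm_nonneg l)
        _ = max MB 0 * ‖l‖ * ‖v‖ := by ring)
  let Φ := (InnerProductSpace.toDual ℂ V).symm
  let T0 : V → V := fun u => Φ (fA u)
  have hT0 : ∀ u v : V, (inner ℂ (T0 u) v : ℂ) = A u v := fun u v => by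
    have h := InnerProductSpace.toDual_symm_apply (𝕜 := ℂ) (E := V) (y := fA u) (x := v)
    simpa [fA, T0, Φ] using h
  have hT0norm : ∀ u : V, ‖T0 u‖ ≤ max MA 0 * ‖u‖ := fun u => by
    have h1 : ‖T0 u‖ = ‖fA u‖ := (InnerProductSpace.toDual ℂ V).symm.norm_map (fA u)
    rw [h1]
    exact LinearMap.mkContinuous_norm_le _ (by positivity) _
  let Tlin : V →ₗ[ℂ] V :=
    { toFun := T0
      map_add' := fun u u' => ext_inner_right ℂ (fun v => by
        rw [hT0, inner_add_left, hT0, hT0, hAadd1])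
      map_smul' := fun c u => ext_inner_right ℂ (fun v => by
        rw [hT0, RingHom.id_apply, inner_smul_left, hT0, hAsmul1]) }
  let T : V →L[ℂ] V := Tlin.mkContinuous (max MA 0) hT0norm
  have hT : ∀ u v : V, (inner ℂ (T u) v : ℂ) = A u v := hT0
  -- the operator R : W → V representing B
  let R : W → V := fun l => Φ (fB l)
  have hR : ∀ (l : W) (v : V), (inner ℂ (R l) v : ℂ) = B v l := fun l v => by
    have h := InnerProductSpace.toDual_symm_apply (𝕜 := ℂ) (E := V) (y := fB l) (x := v)
    simpa [fB, R, Φ] using h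
  have hRnorm : ∀ l : W, ‖R l‖ ≤ max MB 0 * ‖l‖ := fun l => by
    have h1 : ‖R l‖ = ‖fB l‖ := (InnerProductSpace.toDual ℂ V).symm.norm_map (fB l)
    rw [h1]
    exact LinearMap.mkContinuous_norm_le _ (by positivity) _
  have hRadd : ∀ l l' : W, R (l + l') = R l + R l' := fun l l' =>
    ext_inner_right ℂ (fun v => by rw [hR, inner_add_left, hR, hR, hBadd2])
  have hRsmul : ∀ (c : ℂ) (l : W), R (c • l) = (starRingEnd ℂ) c • R l := fun c l =>
    ext_inner_right ℂ (fun v => by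
      rw [hR, inner_smul_left, hR, hBsmul2, Complex.conj_conj])
  have hRzero : R 0 = 0 := by
    have := hRsmul 0 0
    simpa using this
  have hRsub : ∀ l l' : W, R (l - l') = R l - R l' := fun l l' => by
    have h1 : l - l' = l + (-1 : ℂ) • l' := by
      rw [neg_one_smul, sub_eq_add_neg]
    rw [h1, hRadd, hRsmul]
    simp [sub_eq_add_neg]
  have hRlow : ∀ l : W, β * ‖l‖ ≤ ‖R l‖ := fun l => by
    refine (hinfsup l).trans (Real.iSup_le (fun u => ?_) (norm_nonneg _))
    have h1 : ‖B u.1 l‖ = ‖(inner ℂ (R l) u.1 : ℂ)‖ := by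
      rw [hR]
    rw [h1]
    calc ‖(inner ℂ (R l) u.1 : ℂ)‖ ≤ ‖R l‖ * ‖u.1‖ := norm_inner_le_norm _ _
      _ = ‖R l‖ := by rw [u.2, mul_one]
  -- the range of R as a submodule
  let K : Submodule ℂ V :=
    { carrier := Set.range R
      add_mem' := by rintro a b ⟨l, rfl⟩ ⟨l', rfl⟩; exact ⟨l + l', hRadd l l'⟩
      zero_mem' := ⟨0, hRzero⟩
      smul_mem' := by
        rintro c x ⟨l, rfl⟩
        exact ⟨(starRingEnd ℂ) c • l, by rw [hRsmul, Complex.conj_conj]⟩ }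
  have hlip : LipschitzWith ⟨max MB 0, hMB0⟩ R := by
    apply LipschitzWith.of_dist_le_mul
    intro l l'
    rw [dist_eq_norm, dist_eq_norm, ← hRsub]
    exact hRnorm (l - l')
  have hanti : AntilipschitzWith ⟨β⁻¹, by positivity⟩ R := by
    apply AntilipschitzWith.of_le_mul_dist
    intro l l'
    rw [dist_eq_norm, dist_eq_norm, ← hRsub]
    have h1 := hRlow (l - l')
    show ‖l - l'‖ ≤ β⁻¹ * ‖R (l - l')‖
    rw [le_inv_mul_iff₀ hβ]
    exact h1
  have hKclosed : IsClosed (K : Set V) :=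
    hanti.isClosed_range hlip.uniformContinuous
  haveI : CompleteSpace K := hKclosed.completeSpace_coe
  set Z : Submodule ℂ V := Kᗮ with hZdef
  have hZiff : ∀ u : V, u ∈ Z ↔ ∀ μ : W, B u μ = 0 := fun u => by
    constructor
    · intro hu μ
      rw [← hR μ u]
      exact (Submodule.mem_orthogonal K u).1 hu (R μ) ⟨μ, rfl⟩
    · intro hu
      rw [hZdef, Submodule.mem_orthogonal]
      rintro x ⟨μ, rfl⟩
      rw [hR μ u]
      exact hu μ
  haveI : CompleteSpace Z := (Submodule.isClosed_orthogonal K).completeSpace_coe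
  have hZorth : Zᗮ = K := Submodule.orthogonal_orthogonal K
  let P := Submodule.orthogonalProjection Z
  have hproj : ∀ (x : V) (w : Z), (inner ℂ ((P x : Z) : V) (w : V) : ℂ) = inner ℂ x (w : V) :=
    fun x w => by
      have h := Submodule.starProjection_inner_eq_zero x (w : V) w.2
      rw [inner_sub_left] at h
      exact (sub_eq_zero.1 h).symm
  let S : Z →L[ℂ] Z := (Submodule.orthogonalProjection Z).comp (T.comp Z.subtypeL)
  have hScoer : ∀ w : Z, α * ‖w‖ ^ 2 ≤ (inner ℂ (S w) w : ℂ).re := fun w => by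
    have h1 : (inner ℂ (S w) w : ℂ) = inner ℂ (T (w : V)) (w : V) := by
      rw [Submodule.coe_inner]
      exact hproj (T (w : V)) w
    rw [h1, hT]
    have h2 := hAcoer (w : V)
    have h3 : ‖w‖ = ‖(w : V)‖ := rfl
    rw [h3]
    exact h2
  let f : V := Φ F
  have hf : ∀ v : V, (inner ℂ f v : ℂ) = F v := fun v =>
    InnerProductSpace.toDual_symm_apply (𝕜 := ℂ) (E := V) (y := F) (x := v)
  obtain ⟨w0, hw0⟩ := bb_surj_of_coercive S α hα hScoer (P f)
  set u : V := (w0 : V) with hu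
  have hperp : ∀ v : V, v ∈ Z → (inner ℂ (T u - f) v : ℂ) = 0 := fun v hv => by
    rw [inner_sub_left]
    have h1 : (inner ℂ (T u) v : ℂ) = inner ℂ ((P (T u) : Z) : V) v := (hproj _ ⟨v, hv⟩).symm
    have h2 : (inner ℂ f v : ℂ) = inner ℂ ((P f : Z) : V) v := (hproj _ ⟨v, hv⟩).symm
    rw [h1, h2]
    have h3 : P (T u) = P f := by
      have h4 : S w0 = P (T u) := rfl
      rw [← h4, hw0]
    rw [h3, sub_self]
  have hmem : T u - f ∈ Zᗮ := by
    rw [Submodule.mem_orthogonal]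
    intro x hx
    rw [inner_eq_zero_symm]
    exact hperp x hx
  have hmem' : f - T u ∈ K := by
    rw [← hZorth]
    have : f - T u = -(T u - f) := by abel
    rw [this]
    exact neg_mem hmem
  obtain ⟨lam, hlam⟩ := hmem'
  have huZ : u ∈ Z := w0.2
  have hsolB : ∀ μ : W, B u μ = 0 := (hZiff u).1 huZ
  have hsolA : ∀ v : V, A u v + B v lam = F v := fun v => by
    calc A u v + B v lam = inner ℂ (T u) v + (inner ℂ (R lam) v : ℂ) := by rw [hT, hR]
      _ = inner ℂ (T u) v + (inner ℂ (f - T u) v : ℂ) := by rw [hlam]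
      _ = inner ℂ f v := by rw [inner_sub_left]; ring
      _ = F v := hf v
  -- helper: differences
  have hAsub1 : ∀ x y v : V, A (x - y) v = A x v - A y v := fun x y v => by
    have h1 : x - y = x + (-1 : ℂ) • y := by rw [neg_one_smul, sub_eq_add_neg]
    rw [h1, hAadd1, hAsmul1]
    simp [sub_eq_add_neg]
  have hBsub2 : ∀ (v : V) (l l' : W), B v (l - l') = B v l - B v l' := fun v l l' => by
    have h1 : l - l' = l + (-1 : ℂ) • l' := by rw [neg_one_smul, sub_eq_add_neg]
    rw [h1, hBadd2, hBsmul2]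
    ring
  refine ⟨(u, lam), ⟨hsolA, hsolB⟩, ?_⟩
  rintro ⟨u', lam'⟩ ⟨hq1, hq2⟩
  dsimp only at hq1 hq2
  have hu'Z : u' ∈ Z := (hZiff u').2 hq2
  have hdZ : u' - u ∈ Z := Z.sub_mem hu'Z huZ
  have heq : ∀ v : V, A (u' - u) v + B v (lam' - lam) = 0 := fun v => by
    rw [hAsub1, hBsub2]
    linear_combination hq1 v - hsolA v
  have hBd : B (u' - u) (lam' - lam) = 0 := (hZiff _).1 hdZ _
  have hAd : A (u' - u) (u' - u) = 0 := by
    linear_combination heq (u' - u) - hBd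
  have hdu : u' = u := by
    have h1 := hAcoer (u' - u)
    rw [hAd] at h1
    simp only [Complex.zero_re] at h1
    have h2 : ‖u' - u‖ ^ 2 ≤ 0 := by by_contra h; push_neg at h; nlinarith
    have h3 : ‖u' - u‖ = 0 := by nlinarith [norm_nonneg (u' - u), sq_nonneg ‖u' - u‖]
    have h4 : u' - u = 0 := norm_eq_zero.1 h3
    exact sub_eq_zero.1 h4
  have hBlam : ∀ v : V, B v (lam' - lam) = 0 := fun v => by
    have h1 := heq v
    rw [hdu, sub_self] at h1
    have h0 : A 0 v = 0 := by
      have := hAsmul1 0 0 v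
      simpa using this
    linear_combination h1 - h0
  have hRlam : R (lam' - lam) = 0 := by
    have h1 : (inner ℂ (R (lam' - lam)) (R (lam' - lam)) : ℂ) = 0 := by
      rw [hR]; exact hBlam _
    exact inner_self_eq_zero.1 h1
  have hlameq : lam' = lam := by
    have h1 := hRlow (lam' - lam)
    rw [hRlam, norm_zero] at h1
    have h2 : ‖lam' - lam‖ = 0 := by nlinarith [norm_nonneg (lam' - lam)]
    have h3 : lam' - lam = 0 := norm_eq_zero.1 h2
    exact sub_eq_zero.1 h3
  exact Prod.ext hdu hlameq
end
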